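/- Let Γ be a connected, bounded-valence graph and let Λ ⊆ Π ⊆ Γ be connected subgraphs. If incut(Λ) (computed with Λ as a subgraph of Γ) is finite and the Hausdorff distance in Γ between V(Λ) and V(Π) is finite, then incut(Π) is finite. -/

import Mathlib

open SimpleGraph

namespace Paper

variable {V W : Type*}

/-- Locally finite graph: every vertex has finite degree. -/
def LocFin (G : SimpleGraph V) : Prop := ∀ v : V, (G.neighborSet v).Finite

/-- All vertex degrees are at most `d`. -/
def DegLe (G : SimpleGraph V) (d : ℕ) : Prop :=
  ∀ v : V, (G.neighborSet v).Finite ∧ (G.neighborSet v).ncard ≤ d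

/-- Bounded valence. -/
def BddVal (G : SimpleGraph V) : Prop := ∃ d : ℕ, DegLe G d

/-- `(l, e)`-quasi-isometric embedding between the vertex sets of two graphs. -/
def IsQIE (G : SimpleGraph V) (H : SimpleGraph W) (l e : ℝ) (f : V → W) : Prop :=
  ∀ x y : V,
    (G.dist x y : ℝ) / l - e ≤ (H.dist (f x) (f y) : ℝ) ∧
      (H.dist (f x) (f y) : ℝ) ≤ l * (G.dist x y : ℝ) + e

/-- Coarse surjectivity: every vertex of the target lies within distance `e` of the image. -/
def CoarseSurj (H : SimpleGraph W) (e : ℝ) (f : V → W) : Prop :=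
  ∀ w : W, ∃ x : V, (H.dist w (f x) : ℝ) ≤ e

/-- `(l, e)`-quasi-isometry. -/
def IsQI (G : SimpleGraph V) (H : SimpleGraph W) (l e : ℝ) (f : V → W) : Prop :=
  IsQIE G H l e f ∧ CoarseSurj H e f

/-- `g` is an `h`-quasi-inverse of `f`. -/
def IsQInv (G : SimpleGraph V) (h : ℝ) (f : V → W) (g : W → V) : Prop :=
  ∀ x : V, (G.dist (g (f x)) x : ℝ) ≤ h

/-- Reachability by a walk all of whose vertices avoid the set `S`. -/
def ReachOut (G : SimpleGraph V) (S : Set V) (a b : V) : Prop :=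
  ∃ w : G.Walk a b, ∀ v ∈ w.support, v ∉ S

/-- A one-way infinite simple ray. -/
def RayIn (G : SimpleGraph V) (r : ℕ → V) : Prop :=
  Function.Injective r ∧ ∀ n : ℕ, G.Adj (r n) (r (n + 1))

/-- End-equivalence of rays: for every finite vertex set they have tails in the same
connected component of the graph with that set deleted. -/
def EndEquiv (G : SimpleGraph V) (r₁ r₂ : ℕ → V) : Prop :=
  ∀ S : Set V, S.Finite → ∃ N : ℕ, ∀ m n : ℕ, N ≤ m → N ≤ n → ReachOut G S (r₁ m) (r₂ n)

/-- Two points (encoded as sequences: a constant sequence for a vertex, a ray for an end)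
lie in distinct connected components of `G` with the vertex set `S` deleted. -/
def SepComps (G : SimpleGraph V) (S : Set V) (a b : ℕ → V) : Prop :=
  ∃ N : ℕ,
    (∀ m n : ℕ, N ≤ m → N ≤ n → ReachOut G S (a m) (a n)) ∧
    (∀ m n : ℕ, N ≤ m → N ≤ n → ReachOut G S (b m) (b n)) ∧
    (∀ m n : ℕ, N ≤ m → N ≤ n → ¬ ReachOut G S (a m) (b n))

/-- `vs(G) ≥ N`: any vertex set separating two ends has at least `N` elements. -/
def VsGe (G : SimpleGraph V) (N : ℕ) : Prop :=
  ∀ r₁ r₂ : ℕ → V, RayIn G r₁ → RayIn G r₂ →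
    ∀ S : Set V, S.Finite → SepComps G S r₁ r₂ → N ≤ S.ncard

/-- `vs(G) ≥ c` for a real threshold `c`. -/
def VsGeR (G : SimpleGraph V) (c : ℝ) : Prop :=
  ∀ r₁ r₂ : ℕ → V, RayIn G r₁ → RayIn G r₂ →
    ∀ S : Set V, S.Finite → SepComps G S r₁ r₂ → c ≤ (S.ncard : ℝ)

/-- `U` is a connected component of `G` with the vertex set `A` deleted. -/
def IsCompOut (G : SimpleGraph V) (A U : Set V) : Prop :=
  ∃ a ∈ U, ∀ b : V, ReachOut G A a b ↔ b ∈ U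

/-- The edge coboundary `δb` of a vertex set `b`. -/
def cob (G : SimpleGraph V) (b : Set V) : Set (Sym2 V) :=
  {e | ∃ x y : V, e = s(x, y) ∧ G.Adj x y ∧ x ∈ b ∧ y ∉ b}

/-- Membership in the Boolean ring `𝓑G` of vertex sets with finite coboundary. -/
def MemBX (G : SimpleGraph V) (b : Set V) : Prop := (cob G b).Finite

/-- The set of endpoints of the edges of `δb`. -/
def cobVerts (G : SimpleGraph V) (b : Set V) : Set V :=
  {v | ∃ w : V, s(v, w) ∈ cob G b}

/-- A tight element: both sides induce connected subgraphs. -/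
def Tight (G : SimpleGraph V) (b : Set V) : Prop :=
  (G.induce b).Connected ∧ (G.induce bᶜ).Connected

/-- Vertices of `A` that are endpoints of an edge with the other endpoint in `U`. -/
def AttachSet (G : SimpleGraph V) (A U : Set V) : Set V :=
  {v | v ∈ A ∧ ∃ u ∈ U, G.Adj v u}

/-- `incut(A) ≤ k` for a vertex set `A`, with the intrinsic metric of `G.induce A`. -/
def IncutBddSet (G : SimpleGraph V) (A : Set V) (k : ℕ) : Prop :=
  ∀ U : Set V, IsCompOut G A U →
    ∀ v w : A, (v : V) ∈ AttachSet G A U → (w : V) ∈ AttachSet G A U →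
      (G.induce A).dist v w ≤ k

/-- `outcut(A) ≤ k` for a vertex set `A`. -/
def OutcutBddSet (G : SimpleGraph V) (A : Set V) (k : ℕ) : Prop :=
  ∀ U : Set V, IsCompOut G A U → IncutBddSet G U k

/-- Uniform coboundary for a vertex set. -/
def UnifCobSet (G : SimpleGraph V) (A : Set V) : Prop :=
  (∃ k : ℕ, IncutBddSet G A k) ∧ (∃ k : ℕ, OutcutBddSet G A k)

/-- `incut(L) ≤ k` for a subgraph `L`, with its own intrinsic metric. -/
def IncutBddSub (G : SimpleGraph V) (L : G.Subgraph) (k : ℕ) : Prop :=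
  ∀ U : Set V, IsCompOut G L.verts U →
    ∀ v w : L.verts, (v : V) ∈ AttachSet G L.verts U → (w : V) ∈ AttachSet G L.verts U →
      L.coe.dist v w ≤ k

/-- `outcut(L) ≤ k` for a subgraph `L`. -/
def OutcutBddSub (G : SimpleGraph V) (L : G.Subgraph) (k : ℕ) : Prop :=
  ∀ U : Set V, IsCompOut G L.verts U → IncutBddSet G U k

/-- Uniform coboundary for a subgraph. -/
def UnifCobSub (G : SimpleGraph V) (L : G.Subgraph) : Prop :=
  (∃ k : ℕ, IncutBddSub G L k) ∧ (∃ k : ℕ, OutcutBddSub G L k)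

/-- Quasi-transitive graph: the automorphism group has finitely many orbits of vertices. -/
def QuasiTransitive (G : SimpleGraph V) : Prop :=
  ∃ F : Set V, F.Finite ∧ ∀ v : V, ∃ e : G ≃g G, ∃ w ∈ F, e w = v

/-- Hausdorff distance between two vertex sets is at most `r`. -/
def HausBdd (G : SimpleGraph V) (A B : Set V) (r : ℝ) : Prop :=
  (∀ a ∈ A, ∃ b ∈ B, (G.dist a b : ℝ) ≤ r) ∧ (∀ b ∈ B, ∃ a ∈ A, (G.dist a b : ℝ) ≤ r)

/-- Reachability by a walk avoiding the edge set `F`. -/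
def ReachAvoidE (G : SimpleGraph V) (F : Set (Sym2 V)) (a b : V) : Prop :=
  ∃ w : G.Walk a b, ∀ e ∈ w.edges, e ∉ F

/-- The ends of the rays `r₁`, `r₂` are separated by deleting the edge set `F`. -/
def SepEnds (G : SimpleGraph V) (F : Set (Sym2 V)) (r₁ r₂ : ℕ → V) : Prop :=
  ∃ N : ℕ, ∀ m n : ℕ, N ≤ m → N ≤ n → ¬ ReachAvoidE G F (r₁ m) (r₂ n)

/-- Accessibility: some `k ≥ 1` such that any two distinct ends can be separated by
deleting at most `k` edges. -/
def Accessible (G : SimpleGraph V) : Prop :=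
  ∃ k : ℕ, 1 ≤ k ∧ ∀ r₁ r₂ : ℕ → V, RayIn G r₁ → RayIn G r₂ → ¬ EndEquiv G r₁ r₂ →
    ∃ F : Set (Sym2 V), F.Finite ∧ F.ncard ≤ k ∧ SepEnds G F r₁ r₂

/-- `l`-quasi-action of a group on the vertex set of a graph. -/
def IsQAct {G₀ : Type*} [Group G₀] (G : SimpleGraph V) (l : ℝ) (φ : G₀ → V → V) : Prop :=
  (∀ g : G₀, IsQI G G l l (φ g)) ∧
  (∀ (g h : G₀) (x : V), (G.dist (φ (g * h) x) (φ g (φ h x)) : ℝ) ≤ l) ∧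
  (∀ g : G₀, IsQInv G l (φ g) (φ g⁻¹) ∧ IsQInv G l (φ g⁻¹) (φ g))

/-- `B`-cobounded quasi-action. -/
def Cobdd {G₀ : Type*} [Group G₀] (G : SimpleGraph V) (B : ℝ) (φ : G₀ → V → V) : Prop :=
  ∀ x y : V, ∃ g : G₀, (G.dist x (φ g y) : ℝ) ≤ B

/-- The diameter (in `ℕ`) of a vertex set. -/
noncomputable def setDiam (G : SimpleGraph V) (S : Set V) : ℕ :=
  sSup {d : ℕ | ∃ x ∈ S, ∃ y ∈ S, G.dist x y = d}

/-- 2-connected: connected, at least three vertices, and deleting any single vertex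
leaves it connected. -/
def TwoConnected (G : SimpleGraph V) : Prop :=
  G.Connected ∧ (∃ a b c : V, a ≠ b ∧ a ≠ c ∧ b ≠ c) ∧
    ∀ v : V, (G.induce {w : V | w ≠ v}).Connected

/-- Tree decomposition. -/
def IsTreeDecomp {VT : Type*} (X : SimpleGraph V) (T : SimpleGraph VT) (B : VT → Set V) :
    Prop :=
  T.IsTree ∧ (∀ x : V, ∃ u : VT, x ∈ B u) ∧
    ∀ u v w : VT, (∃ p : T.Walk u w, p.IsPath ∧ v ∈ p.support) → B u ∩ B w ⊆ B v

/-- Bounded adhesion. -/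
def BddAdhesion {VT : Type*} (T : SimpleGraph VT) (B : VT → Set V) : Prop :=
  ∃ N : ℕ, ∀ u w : VT, T.Adj u w → (B u ∩ B w).Finite ∧ (B u ∩ B w).ncard ≤ N

/-- Connected parts. -/
def ConnParts {VT : Type*} (X : SimpleGraph V) (B : VT → Set V) : Prop :=
  ∀ u : VT, (X.induce (B u)).Connected

/-- Replacing each bag by its closed `r`-neighbourhood. -/
def ballBag {VT : Type*} (X : SimpleGraph V) (B : VT → Set V) (r : ℕ) : VT → Set V :=
  fun u => {x : V | ∃ y ∈ B u, X.dist x y ≤ r}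

/-- A point of `G` which is either a vertex lying outside `B(S;R)` (encoded as a constant
sequence) or an end (encoded as a ray representing it). -/
def PtSeq (G : SimpleGraph V) (S : Set V) (R : ℝ) (a : ℕ → V) : Prop :=
  (∃ v : V, a = Function.const ℕ v ∧ ∀ s ∈ S, R < (G.dist v s : ℝ)) ∨ RayIn G a

/-- A subring of `𝓑G`: contains `∅`, and is closed under intersection and
symmetric difference. -/
def IsSubring (G : SimpleGraph V) (R : Set (Set V)) : Prop :=
  (∀ b ∈ R, MemBX G b) ∧ ∅ ∈ R ∧
    (∀ a ∈ R, ∀ b ∈ R, a ∩ b ∈ R) ∧ (∀ a ∈ R, ∀ b ∈ R, symmDiff a b ∈ R)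

/-- The subring generated by a family. -/
def genSubring (G : SimpleGraph V) (E : Set (Set V)) : Set (Set V) :=
  ⋂₀ {R : Set (Set V) | IsSubring G R ∧ E ⊆ R}

/-- Two vertex sets are nested. -/
def Nested (a b : Set V) : Prop :=
  a ∩ b = ∅ ∨ a ∩ bᶜ = ∅ ∨ aᶜ ∩ b = ∅ ∨ aᶜ ∩ bᶜ = ∅

/-- A nested family: closed under complementation and pairwise nested. -/
def NestedFam (E : Set (Set V)) : Prop :=
  (∀ b ∈ E, bᶜ ∈ E) ∧ ∀ a ∈ E, ∀ b ∈ E, Nested a b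

/-- A `G₀`-invariant family of vertex sets. -/
def GInvFam (G₀ : Type*) [Group G₀] [MulAction G₀ V] (E : Set (Set V)) : Prop :=
  ∀ g : G₀, ∀ b ∈ E, (fun x => g • x) '' b ∈ E

/-- A `G₀`-finite family of vertex sets: it meets only finitely many orbits. -/
def GFinFam (G₀ : Type*) [Group G₀] [MulAction G₀ V] (E : Set (Set V)) : Prop :=
  ∃ F : Set (Set V), F.Finite ∧ F ⊆ E ∧
    ∀ b ∈ E, ∃ g : G₀, ∃ c ∈ F, (fun x => g • x) '' c = b

/-- `g` stabilises the subgraph `L` setwise. -/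
def StabSub {G₀ : Type*} [Group G₀] [MulAction G₀ V] (G : SimpleGraph V) (g : G₀)
    (L : G.Subgraph) : Prop :=
  (∀ v : V, v ∈ L.verts ↔ g • v ∈ L.verts) ∧
    (∀ a b : V, L.Adj a b ↔ L.Adj (g • a) (g • b))

end Paper

namespace Paper

variable {V : Type*}

variable {Γ : SimpleGraph V} {S : Set V} {a b c : V}

lemma reachOut_refl (ha : a ∉ S) : ReachOut Γ S a a :=
  ⟨Walk.nil, by simpa using ha⟩

lemma reachOut_symm (h : ReachOut Γ S a b) : ReachOut Γ S b a := by
  obtain ⟨w, hw⟩ := h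
  exact ⟨w.reverse, fun v hv => hw v (by simpa [Walk.support_reverse] using hv)⟩

lemma reachOut_trans (h1 : ReachOut Γ S a b) (h2 : ReachOut Γ S b c) :
    ReachOut Γ S a c := by
  obtain ⟨w1, hw1⟩ := h1; obtain ⟨w2, hw2⟩ := h2
  refine ⟨w1.append w2, fun v hv => ?_⟩
  rcases (Walk.mem_support_append_iff w1 w2).mp hv with h | h
  exacts [hw1 v h, hw2 v h]

lemma reachOut_adj (h : Γ.Adj a b) (ha : a ∉ S) (hb : b ∉ S) : ReachOut Γ S a b := by
  refine ⟨h.toWalk, fun v hv => ?_⟩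
  have : v = a ∨ v = b := by simpa [Adj.toWalk] using hv
  rcases this with rfl | rfl <;> assumption

lemma reachOut_start_not_mem (h : ReachOut Γ S a b) : a ∉ S := by
  obtain ⟨w, hw⟩ := h; exact hw a w.start_mem_support

lemma reachOut_end_not_mem (h : ReachOut Γ S a b) : b ∉ S := by
  obtain ⟨w, hw⟩ := h; exact hw b w.end_mem_support

lemma reachOut_mono {T : Set V} (hTS : T ⊆ S) (h : ReachOut Γ S a b) : ReachOut Γ T a b := by
  obtain ⟨w, hw⟩ := h; exact ⟨w, fun v hv hvT => hw v hv (hTS hvT)⟩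

lemma ball_finset (hc : Γ.Connected) {d : ℕ} (hd : DegLe Γ d) (cv : V) (n : ℕ) :
    ∃ F : Finset V, (∀ x, Γ.dist cv x ≤ n → x ∈ F) ∧ F.card ≤ (d + 1) ^ n := by
  classical
  induction n with
  | zero =>
    refine ⟨{cv}, fun x hx => ?_, by simp⟩
    rw [Nat.le_zero, hc.dist_eq_zero_iff] at hx
    simp [hx]
  | succ n ih =>
    obtain ⟨F, hF, hcard⟩ := ih
    refine ⟨F ∪ F.biUnion (fun y => (hd y).1.toFinset), fun x hx => ?_, ?_⟩
    · rcases Nat.lt_or_ge (Γ.dist cv x) (n + 1) with h | h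
      · exact Finset.mem_union_left _ (hF x (Nat.lt_succ_iff.mp h))
      · have hdist : Γ.dist cv x = n + 1 := le_antisymm hx h
        have hne : x ≠ cv := by
          rintro rfl; simp [SimpleGraph.dist_self] at hdist
        obtain ⟨p, hp⟩ := (hc.preconnected cv x).exists_walk_length_eq_dist
        obtain ⟨y, hadj, q, hq⟩ := Walk.exists_eq_cons_of_ne hne p.reverse
        have hql : q.length = n := by
          have h2 := congrArg Walk.length hq
          rw [Walk.length_reverse, hp, hdist, Walk.length_cons] at h2
          omega
        have hy : Γ.dist cv y ≤ n := by
          have h3 : Γ.dist y cv ≤ n := by simpa [hql] using SimpleGraph.dist_le q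
          rw [SimpleGraph.dist_comm (u := cv) (v := y)]
          exact h3
        refine Finset.mem_union_right _ (Finset.mem_biUnion.mpr ⟨y, hF y hy, ?_⟩)
        rw [Set.Finite.mem_toFinset]
        exact hadj.symm
    · have h1 : (F.biUnion (fun y => (hd y).1.toFinset)).card ≤ F.card * d := by
        refine le_trans (Finset.card_biUnion_le) ?_
        have : ∀ y ∈ F, ((hd y).1.toFinset).card ≤ d := by
          intro y _
          rw [← Set.ncard_eq_toFinset_card _ (hd y).1]
          exact (hd y).2
        calc ∑ y ∈ F, ((hd y).1.toFinset).card ≤ ∑ _y ∈ F, d :=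
              Finset.sum_le_sum this
          _ = F.card * d := by simp [Finset.sum_const, mul_comm]
      calc (F ∪ F.biUnion fun y => (hd y).1.toFinset).card
          ≤ F.card + F.card * d := le_trans (Finset.card_union_le _ _) (by omega)
        _ ≤ (d+1)^n + (d+1)^n * d := by nlinarith [hcard]
        _ = (d+1)^(n+1) := by ring

/-- Nodup list of elements mapping injectively into a finset: length bound. -/
lemma nodup_length_le {X : Type*} {f : X → V} (hf : Function.Injective f) {l : List X}
    (hl : l.Nodup) {F : Finset V} (h : ∀ x ∈ l, f x ∈ F) : l.length ≤ F.card := by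
  classical
  have h1 : (l.map f).Nodup := hl.map hf
  calc l.length = (l.map f).length := (List.length_map f).symm
    _ = (l.map f).toFinset.card := (List.toFinset_card_of_nodup h1).symm
    _ ≤ F.card := by
        refine Finset.card_le_card (fun v hv => ?_)
        rw [List.mem_toFinset, List.mem_map] at hv
        obtain ⟨x, hx, rfl⟩ := hv
        exact h x hx

/-- First hit of `S` along a walk in `Γ`. -/
lemma firstHit (hc : Γ.Connected) {p a : V} (w : Γ.Walk p a) :
    p ∉ S → a ∈ S →
    ∃ q ∈ S, ∃ q', q' ∉ S ∧ ReachOut Γ S p q' ∧ Γ.Adj q' q ∧ Γ.dist p q ≤ w.length := by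
  induction w with
  | nil => intro hp ha; exact absurd ha hp
  | @cons u b a h w ih =>
    intro hp ha
    by_cases hb : b ∈ S
    · refine ⟨b, hb, u, hp, reachOut_refl hp, h, ?_⟩
      have h1 : Γ.dist u b ≤ 1 := by simpa [Adj.toWalk] using SimpleGraph.dist_le h.toWalk
      simp only [Walk.length_cons]; omega
    · obtain ⟨q, hq, q', hq', hro, hadj, hdist⟩ := ih hb ha
      refine ⟨q, hq, q', hq', reachOut_trans (reachOut_adj h hp hb) hro, hadj, ?_⟩
      have h1 : Γ.dist u b ≤ 1 := by simpa [Adj.toWalk] using SimpleGraph.dist_le h.toWalk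
      have h2 := hc.dist_triangle (u := u) (v := b) (w := q)
      simp only [Walk.length_cons]; omega

/-- First hit of `S` along a walk in `P.coe`, with attachment data. -/
lemma firstHitP {P : Γ.Subgraph} {x z : P.verts} (w : P.coe.Walk x z) :
    (x : V) ∉ S → (z : V) ∈ S →
    ∃ (y : P.verts) (w' : P.coe.Walk x y), (y : V) ∈ S ∧
      (∀ u ∈ w'.support, u ≠ y → ((u : V) ∉ S ∧ ReachOut Γ S x u)) ∧
      ∃ u₀ : P.verts, (u₀ : V) ∉ S ∧ ReachOut Γ S x u₀ ∧ Γ.Adj u₀ y := by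
  induction w with
  | nil => intro hx hz; exact absurd hz hx
  | @cons x b z h w ih =>
    intro hx hz
    have hΓadj : Γ.Adj (x : V) (b : V) := P.adj_sub h
    by_cases hb : (b : V) ∈ S
    · refine ⟨b, Walk.cons h Walk.nil, hb, ?_, x, hx, reachOut_refl hx, hΓadj⟩
      intro u hu hne
      have : u = x ∨ u = b := by simpa using hu
      rcases this with rfl | rfl
      · exact ⟨hx, reachOut_refl hx⟩
      · exact absurd rfl hne
    · obtain ⟨y, w', hy, hsup, u₀, hu₀, hro₀, hadj₀⟩ := ih hb hz
      have hedge : ReachOut Γ S (x : V) (b : V) := reachOut_adj hΓadj hx hb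
      refine ⟨y, Walk.cons h w', hy, ?_, u₀, hu₀, reachOut_trans hedge hro₀, hadj₀⟩
      intro u hu hne
      have : u = x ∨ u ∈ w'.support := by simpa using hu
      rcases this with rfl | hu'
      · exact ⟨hx, reachOut_refl hx⟩
      · obtain ⟨h1, h2⟩ := hsup u hu' hne
        exact ⟨h1, reachOut_trans hedge h2⟩

/-- Distance in a larger subgraph is at most distance in a smaller one. -/
lemma dist_le_of_subgraph_le {L P : Γ.Subgraph} (hLP : L ≤ P) (hLc : L.coe.Connected)
    (v w : L.verts) :
    P.coe.dist ⟨(v : V), hLP.1 v.2⟩ ⟨(w : V), hLP.1 w.2⟩ ≤ L.coe.dist v w := by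
  obtain ⟨p, hp⟩ := (hLc.preconnected v w).exists_walk_length_eq_dist
  have := SimpleGraph.dist_le (p.map (SimpleGraph.Subgraph.inclusion hLP))
  rwa [Walk.length_map, hp] at this

/-- Distance in `Γ` is at most distance in a subgraph. -/
lemma dist_le_of_subgraph {L : Γ.Subgraph} (hLc : L.coe.Connected) (v w : L.verts) :
    Γ.dist (v : V) (w : V) ≤ L.coe.dist v w := by
  obtain ⟨p, hp⟩ := (hLc.preconnected v w).exists_walk_length_eq_dist
  have := SimpleGraph.dist_le (p.map L.hom)
  rwa [Walk.length_map, hp] at this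

lemma distToAttach (hc : Γ.Connected) {d : ℕ} (hd : DegLe Γ d)
    {L P : Γ.Subgraph} (hLP : L ≤ P) (hLc : L.coe.Connected) (hPc : P.coe.Connected)
    {k : ℕ} (hk : IncutBddSub Γ L k)
    {r' : ℕ} (hr : ∀ b ∈ P.verts, ∃ a ∈ L.verts, Γ.dist a b ≤ r')
    {a₀ : V} (ha₀ : a₀ ∉ L.verts)
    (v : P.verts) (hv : ReachOut Γ L.verts a₀ (v : V)) :
    ∃ y : P.verts, (y : V) ∈ L.verts ∧
      (y : V) ∈ AttachSet Γ L.verts {b | ReachOut Γ L.verts a₀ b} ∧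
      P.coe.dist v y ≤ (d + 1) ^ (r' + k) := by
  classical
  set U' : Set V := {b | ReachOut Γ L.verts a₀ b} with hU'def
  have hU' : IsCompOut Γ L.verts U' := ⟨a₀, reachOut_refl ha₀, fun b => Iff.rfl⟩
  have hvL : (v : V) ∉ L.verts := reachOut_end_not_mem hv
  obtain ⟨z⟩ := hLc.nonempty
  have hzP : (z : V) ∈ P.verts := hLP.1 z.2
  obtain ⟨w⟩ := hPc.preconnected v ⟨(z : V), hzP⟩
  obtain ⟨y, w', hy, hsup, u₀, hu₀, hro₀, hadj₀⟩ := firstHitP (S := L.verts) w hvL z.2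
  have hyAtt : (y : V) ∈ AttachSet Γ L.verts U' :=
    ⟨hy, u₀, reachOut_trans hv hro₀, hadj₀.symm⟩
  refine ⟨y, hy, hyAtt, ?_⟩
  set p : P.coe.Walk v y := (w'.toPath : P.coe.Walk v y) with hpdef
  have hpPath : p.IsPath := w'.toPath.2
  have hpsup : ∀ u ∈ p.support, u ∈ w'.support := fun u hu => w'.support_toPath_subset hu
  have hclose : ∀ u ∈ p.support, Γ.dist (y : V) (u : V) ≤ r' + k := by
    intro u hu
    by_cases hne : u = y
    · subst hne; simp [SimpleGraph.dist_self]
    · obtain ⟨huL, huro⟩ := hsup u (hpsup u hu) hne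
      obtain ⟨a, haL, hdista⟩ := hr (u : V) u.2
      obtain ⟨ω, hω⟩ := (hc.preconnected (u : V) a).exists_walk_length_eq_dist
      obtain ⟨q, hqL, q', hq', hroq, hadjq, hdistq⟩ := firstHit hc ω huL haL
      have hdq : Γ.dist (u : V) q ≤ r' := by
        rw [hω] at hdistq
        have h4 : Γ.dist (u : V) a ≤ r' := by
          rw [SimpleGraph.dist_comm]; exact hdista
        omega
      have hqAtt : q ∈ AttachSet Γ L.verts U' :=
        ⟨hqL, q', reachOut_trans hv (reachOut_trans huro hroq), hadjq.symm⟩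
      have hL := hk U' hU' ⟨q, hqL⟩ ⟨(y : V), hy⟩ hqAtt hyAtt
      have hΓqy : Γ.dist q (y : V) ≤ k :=
        le_trans (dist_le_of_subgraph hLc ⟨q, hqL⟩ ⟨(y : V), hy⟩) hL
      have htri := hc.dist_triangle (u := (y : V)) (v := q) (w := (u : V))
      have h1 : Γ.dist (y : V) q ≤ k := by rw [SimpleGraph.dist_comm]; exact hΓqy
      have h2 : Γ.dist q (u : V) ≤ r' := by rw [SimpleGraph.dist_comm]; exact hdq
      omega
  obtain ⟨F, hF, hFcard⟩ := ball_finset hc hd (y : V) (r' + k)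
  have hlen : p.support.length ≤ F.card :=
    nodup_length_le Subtype.val_injective hpPath.support_nodup
      (fun u hu => hF (u : V) (hclose u hu))
  have hls : p.support.length = p.length + 1 := Walk.length_support p
  have h5 : p.length + 1 ≤ (d + 1) ^ (r' + k) := by
    rw [← hls]; exact le_trans hlen hFcard
  exact le_trans (SimpleGraph.dist_le p) (Nat.le_of_succ_le h5)

end Paper

open Paper in
theorem stmt15 {V : Type*} (Γ : SimpleGraph V) (hc : Γ.Connected) (hbv : BddVal Γ)
    (Λ P : Γ.Subgraph) (hΛP : Λ ≤ P)
    (hΛc : Λ.coe.Connected) (hPc : P.coe.Connected)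
    (hin : ∃ k : ℕ, IncutBddSub Γ Λ k)
    (hhaus : ∃ r : ℝ, HausBdd Γ Λ.verts P.verts r) :
    ∃ k' : ℕ, IncutBddSub Γ P k' := by
  obtain ⟨d, hd⟩ := hbv
  obtain ⟨k, hk⟩ := hin
  obtain ⟨r, hr⟩ := hhaus
  set r' : ℕ := ⌈r⌉₊ with hr'def
  have hr' : ∀ b ∈ P.verts, ∃ a ∈ Λ.verts, Γ.dist a b ≤ r' := by
    intro b hb
    obtain ⟨a, haΛ, hab⟩ := hr.2 b hb
    refine ⟨a, haΛ, ?_⟩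
    have : (Γ.dist a b : ℝ) ≤ (r' : ℝ) := le_trans hab (Nat.le_ceil r)
    exact_mod_cast this
  set D : ℕ := (d + 1) ^ (r' + k) with hDdef
  refine ⟨D + k + D, ?_⟩
  intro U hU v w hv hw
  obtain ⟨a₀, ha₀U, hchar⟩ := hU
  have ha₀P : a₀ ∉ P.verts := reachOut_start_not_mem ((hchar a₀).mpr ha₀U)
  have ha₀Λ : a₀ ∉ Λ.verts := fun h => ha₀P (hΛP.1 h)
  obtain ⟨hvP, uv, huvU, hadjv⟩ := hv
  obtain ⟨hwP, uw, huwU, hadjw⟩ := hw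
  have hrov : ReachOut Γ Λ.verts a₀ uv := reachOut_mono hΛP.1 ((hchar uv).mpr huvU)
  have hrow : ReachOut Γ Λ.verts a₀ uw := reachOut_mono hΛP.1 ((hchar uw).mpr huwU)
  have huvP : uv ∉ P.verts := reachOut_end_not_mem ((hchar uv).mpr huvU)
  have huwP : uw ∉ P.verts := reachOut_end_not_mem ((hchar uw).mpr huwU)
  set U' : Set V := {b | ReachOut Γ Λ.verts a₀ b} with hU'def
  have hU'comp : IsCompOut Γ Λ.verts U' := ⟨a₀, reachOut_refl ha₀Λ, fun b => Iff.rfl⟩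
  -- produce attach points for v and w
  have key : ∀ (x : P.verts) (ux : V), ReachOut Γ Λ.verts a₀ ux → Γ.Adj (x : V) ux →
      ∃ y : P.verts, (y : V) ∈ Λ.verts ∧ (y : V) ∈ AttachSet Γ Λ.verts U' ∧
        P.coe.dist x y ≤ D := by
    intro x ux hroux hadjx
    have huxΛ : ux ∉ Λ.verts := reachOut_end_not_mem hroux
    by_cases hxΛ : (x : V) ∈ Λ.verts
    · exact ⟨x, hxΛ, ⟨hxΛ, ux, hroux, hadjx⟩, by simp [SimpleGraph.dist_self]⟩
    · have hrovx : ReachOut Γ Λ.verts a₀ (x : V) :=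
        reachOut_trans hroux (reachOut_adj hadjx.symm huxΛ hxΛ)
      obtain ⟨y, hy, hyAtt, hdist⟩ := distToAttach hc hd hΛP hΛc hPc hk hr' ha₀Λ x hrovx
      exact ⟨y, hy, hyAtt, hdist⟩
  obtain ⟨yv, hyvΛ, hyvAtt, hdv⟩ := key v uv hrov hadjv
  obtain ⟨yw, hywΛ, hywAtt, hdw⟩ := key w uw hrow hadjw
  have hmid : Λ.coe.dist ⟨(yv : V), hyvΛ⟩ ⟨(yw : V), hywΛ⟩ ≤ k :=
    hk U' hU'comp ⟨(yv : V), hyvΛ⟩ ⟨(yw : V), hywΛ⟩ hyvAtt hywAtt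
  have hmidP : P.coe.dist yv yw ≤ k := by
    have h1 := dist_le_of_subgraph_le hΛP hΛc ⟨(yv : V), hyvΛ⟩ ⟨(yw : V), hywΛ⟩
    have h2 : (⟨((⟨(yv : V), hyvΛ⟩ : Λ.verts) : V), hΛP.1 hyvΛ⟩ : P.verts) = yv :=
      Subtype.ext rfl
    have h3 : (⟨((⟨(yw : V), hywΛ⟩ : Λ.verts) : V), hΛP.1 hywΛ⟩ : P.verts) = yw :=
      Subtype.ext rfl
    rw [h2, h3] at h1
    exact le_trans h1 hmid
  have ht1 := hPc.dist_triangle (u := v) (v := yv) (w := w)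
  have ht2 := hPc.dist_triangle (u := yv) (v := yw) (w := w)
  have hsymm : P.coe.dist yw w = P.coe.dist w yw := SimpleGraph.dist_comm
  omega
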